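/- Let p ∈ (1, 2) and ε > 0, and define ν_ε(y) := (|y|² + ε²)^{1/2} for y ∈ ℝ^d. Then for all x, u ∈ ℝ^d one has ν_ε(x+u)^p − ν_ε(x)^p − p ν_ε(x)^{p−2} ⟨x, u⟩ ≥ p(p−1) |u|² ∫₀¹ (1 − r) ν_ε(x + r·u)^{p−2} dr. -/

import Mathlib

open scoped RealInnerProductSpace

/-- Taylor inequality with integral remainder from the proof of Lemma 3.5:
for `p ∈ (1, 2)`, `ε > 0`, `ν_ε(y) = (|y|² + ε²)^(1/2)` and all `x, u ∈ ℝ^d`,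
`ν_ε(x+u)^p - ν_ε(x)^p - p ν_ε(x)^(p-2)⟨x,u⟩ ≥ p(p-1)|u|² ∫₀¹ (1-r) ν_ε(x+ru)^(p-2) dr`. -/
theorem nu_eps_taylor_integral_lower_bound
    (p : ℝ) (hp1 : 1 < p) (hp2 : p < 2) (ε : ℝ) (hε : 0 < ε) (d : ℕ)
    (x u : EuclideanSpace ℝ (Fin d)) :
    p * (p - 1) * ‖u‖ ^ 2 *
        ∫ r in (0:ℝ)..1, (1 - r) * Real.sqrt (‖x + r • u‖ ^ 2 + ε ^ 2) ^ (p - 2) ≤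
      Real.sqrt (‖x + u‖ ^ 2 + ε ^ 2) ^ p - Real.sqrt (‖x‖ ^ 2 + ε ^ 2) ^ p -
        p * Real.sqrt (‖x‖ ^ 2 + ε ^ 2) ^ (p - 2) * ⟪x, u⟫ := by
  set a : ℝ := ‖u‖ ^ 2 with ha
  set b : ℝ := ⟪x, u⟫ with hb
  set c : ℝ := ‖x‖ ^ 2 + ε ^ 2 with hc
  set q : ℝ → ℝ := fun r => c + 2 * b * r + a * r ^ 2 with hqdef
  have key : ∀ r : ℝ, q r = ‖x + r • u‖ ^ 2 + ε ^ 2 := by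
    intro r
    have h1 : ‖x + r • u‖ ^ 2 = ‖x‖ ^ 2 + 2 * ⟪x, r • u⟫ + ‖r • u‖ ^ 2 :=
      norm_add_sq_real x (r • u)
    have h2 : ⟪x, r • u⟫ = r * b := real_inner_smul_right x u r
    have h3 : ‖r • u‖ ^ 2 = r ^ 2 * a := by
      rw [norm_smul, mul_pow, Real.norm_eq_abs, sq_abs]
    rw [h1, h2, h3]; simp only [hqdef, hc]; ring
  have hq_pos : ∀ r : ℝ, 0 < q r := fun r => by
    rw [key r]; positivity
  have hq' : ∀ r : ℝ, HasDerivAt q (2 * b + 2 * a * r) r := by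
    intro r
    have h := (((hasDerivAt_id r).const_mul (2 * b)).const_add c).add
      ((hasDerivAt_pow 2 r).const_mul a)
    refine h.congr_deriv ?_
    simp; ring
  set f : ℝ → ℝ := fun r => q r ^ (p / 2) with hf
  set D1 : ℝ → ℝ := fun r => p / 2 * q r ^ (p / 2 - 1) * (2 * b + 2 * a * r) with hD1
  have hf' : ∀ r, HasDerivAt f (D1 r) r := by
    intro r
    have h := (hq' r).rpow_const (p := p / 2) (Or.inl (hq_pos r).ne')
    convert h using 1
    simp only [hD1]; ring
  set D2 : ℝ → ℝ := fun r =>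
    p / 2 * ((p / 2 - 1) * q r ^ (p / 2 - 1 - 1) * (2 * b + 2 * a * r) * (2 * b + 2 * a * r)
      + q r ^ (p / 2 - 1) * (2 * a)) with hD2
  have hD1' : ∀ r, HasDerivAt D1 (D2 r) r := by
    intro r
    have hg : HasDerivAt (fun r => q r ^ (p / 2 - 1))
        ((p / 2 - 1) * q r ^ (p / 2 - 1 - 1) * (2 * b + 2 * a * r)) r := by
      have h := (hq' r).rpow_const (p := p / 2 - 1) (Or.inl (hq_pos r).ne')
      convert h using 1
      ring
    have hl : HasDerivAt (fun r : ℝ => 2 * b + 2 * a * r) (2 * a) r := by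
      have := ((hasDerivAt_id r).const_mul (2 * a)).const_add (2 * b)
      simpa using this
    have hD1eq : D1 = fun y => p / 2 * (q y ^ (p / 2 - 1) * (2 * b + 2 * a * y)) := by
      funext y; simp only [hD1]; ring
    rw [hD1eq]
    exact (hg.mul hl).const_mul (p / 2)
  set G : ℝ → ℝ := fun r => (1 - r) * D1 r + f r with hG
  have hG' : ∀ r : ℝ, HasDerivAt G ((1 - r) * D2 r) r := by
    intro r
    have h1 : HasDerivAt (fun r : ℝ => 1 - r) (-1) r := by
      simpa using (hasDerivAt_id r).const_sub 1
    have h := (h1.mul (hD1' r)).add (hf' r)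
    refine h.congr_deriv ?_
    ring
  have hqc : Continuous q := by fun_prop
  have hrc : ∀ s : ℝ, Continuous fun r => q r ^ s := fun s =>
    hqc.rpow_const fun r => Or.inl (hq_pos r).ne'
  have hlin : Continuous fun r : ℝ => 2 * b + 2 * a * r := by fun_prop
  have hD2c : Continuous D2 := by
    apply Continuous.mul continuous_const
    apply Continuous.add
    · exact ((continuous_const.mul (hrc _)).mul hlin).mul hlin
    · exact (hrc _).mul continuous_const
  have h1rc : Continuous fun r : ℝ => 1 - r := by fun_prop
  have hInt : IntervalIntegrable (fun r => (1 - r) * D2 r) MeasureTheory.volume 0 1 :=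
    (h1rc.mul hD2c).intervalIntegrable 0 1
  have hIntL : IntervalIntegrable
      (fun r => (1 - r) * (p * (p - 1) * a * q r ^ (p / 2 - 1))) MeasureTheory.volume 0 1 :=
    (h1rc.mul (continuous_const.mul (hrc _))).intervalIntegrable 0 1
  have hFTC : ∫ r in (0:ℝ)..1, (1 - r) * D2 r = G 1 - G 0 :=
    intervalIntegral.integral_eq_sub_of_hasDerivAt (fun r _ => hG' r) hInt
  -- pointwise bound
  have hbound : ∀ r : ℝ, p * (p - 1) * a * q r ^ (p / 2 - 1) ≤ D2 r := by
    intro r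
    have hQ := hq_pos r
    have hE1 : (0:ℝ) < q r ^ (p / 2 - 1) := Real.rpow_pos_of_pos hQ _
    have hE2 : (0:ℝ) < q r ^ (p / 2 - 1 - 1) := Real.rpow_pos_of_pos hQ _
    have hEmul : q r ^ (p / 2 - 1 - 1) * q r = q r ^ (p / 2 - 1) := by
      rw [← Real.rpow_add_one hQ.ne']
      congr 1; ring
    have hCS : (b + a * r) ^ 2 ≤ a * q r := by
      have h1 : ⟪x + r • u, u⟫ = b + a * r := by
        rw [inner_add_left, real_inner_smul_left, real_inner_self_eq_norm_sq]
        simp only [hb, ha]; ring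
      have h2 := real_inner_mul_inner_self_le (x + r • u) u
      rw [h1, real_inner_self_eq_norm_sq, real_inner_self_eq_norm_sq] at h2
      have h3 : ‖x + r • u‖ ^ 2 ≤ q r := by
        rw [key r]; nlinarith [sq_nonneg ε]
      nlinarith [h2, h3, ha, sq_nonneg ‖u‖, sq_nonneg ‖x + r • u‖]
    have hl2 : (2 * b + 2 * a * r) * (2 * b + 2 * a * r) ≤ 4 * (a * q r) := by
      nlinarith [hCS]
    have hneg : (p / 2 - 1) * q r ^ (p / 2 - 1 - 1) ≤ 0 :=
      (mul_neg_of_neg_of_pos (by linarith) hE2).le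
    have h5 := mul_le_mul_of_nonpos_left hl2 hneg
    have h6 : (p / 2 - 1) * q r ^ (p / 2 - 1 - 1) * (4 * (a * q r))
        = 4 * a * (p / 2 - 1) * q r ^ (p / 2 - 1) := by
      rw [← hEmul]; ring
    rw [h6] at h5
    have h7 := mul_le_mul_of_nonneg_left h5 (by linarith : (0:ℝ) ≤ p / 2)
    have hD2r : D2 r = p / 2 * ((p / 2 - 1) * q r ^ (p / 2 - 1 - 1) * (2 * b + 2 * a * r) *
        (2 * b + 2 * a * r) + q r ^ (p / 2 - 1) * (2 * a)) := rfl
    rw [hD2r]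
    linarith [h7]
  have hmono : ∫ r in (0:ℝ)..1, (1 - r) * (p * (p - 1) * a * q r ^ (p / 2 - 1))
      ≤ ∫ r in (0:ℝ)..1, (1 - r) * D2 r := by
    apply intervalIntegral.integral_mono_on (by norm_num) hIntL hInt
    intro r hr
    exact mul_le_mul_of_nonneg_left (hbound r) (by linarith [hr.2])
  -- rewrite LHS integral
  have hsqrt : ∀ r : ℝ, Real.sqrt (‖x + r • u‖ ^ 2 + ε ^ 2) ^ (p - 2) = q r ^ (p / 2 - 1) := by
    intro r
    have hA : (0:ℝ) ≤ ‖x + r • u‖ ^ 2 + ε ^ 2 := by positivity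
    rw [Real.sqrt_eq_rpow, ← Real.rpow_mul hA, ← key r]
    congr 1; ring
  have hLHS : p * (p - 1) * a *
      (∫ r in (0:ℝ)..1, (1 - r) * Real.sqrt (‖x + r • u‖ ^ 2 + ε ^ 2) ^ (p - 2))
      = ∫ r in (0:ℝ)..1, (1 - r) * (p * (p - 1) * a * q r ^ (p / 2 - 1)) := by
    rw [← intervalIntegral.integral_const_mul]
    apply intervalIntegral.integral_congr
    intro r _
    show p * (p - 1) * a * ((1 - r) * Real.sqrt (‖x + r • u‖ ^ 2 + ε ^ 2) ^ (p - 2))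
      = (1 - r) * (p * (p - 1) * a * q r ^ (p / 2 - 1))
    rw [hsqrt r]; ring
  -- rewrite RHS
  have hq1 : q 1 = ‖x + u‖ ^ 2 + ε ^ 2 := by rw [key 1, one_smul]
  have hq0 : q 0 = c := by simp [hqdef]
  have hr1 : Real.sqrt (‖x + u‖ ^ 2 + ε ^ 2) ^ p = f 1 := by
    have hA : (0:ℝ) ≤ ‖x + u‖ ^ 2 + ε ^ 2 := by positivity
    rw [Real.sqrt_eq_rpow, ← Real.rpow_mul hA]
    simp only [hf, hq1]
    congr 1; ring
  have hr0 : Real.sqrt c ^ p = f 0 := by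
    have hA : (0:ℝ) ≤ c := by positivity
    rw [Real.sqrt_eq_rpow, ← Real.rpow_mul hA]
    simp only [hf, hq0]
    congr 1; ring
  have hr0' : Real.sqrt c ^ (p - 2) = q 0 ^ (p / 2 - 1) := by
    have hA : (0:ℝ) ≤ c := by positivity
    rw [Real.sqrt_eq_rpow, ← Real.rpow_mul hA, hq0]
    congr 1; ring
  have hGdiff : G 1 - G 0 = f 1 - f 0 - p * q 0 ^ (p / 2 - 1) * b := by
    simp only [hG, hD1]
    ring
  rw [hr1, hr0, hr0', hLHS]
  calc (∫ r in (0:ℝ)..1, (1 - r) * (p * (p - 1) * a * q r ^ (p / 2 - 1)))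
      ≤ ∫ r in (0:ℝ)..1, (1 - r) * D2 r := hmono
    _ = G 1 - G 0 := hFTC
    _ = f 1 - f 0 - p * q 0 ^ (p / 2 - 1) * b := hGdiff
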